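/- Let λ > 0 and let η : [0,∞) → ℝ be twice continuously differentiable with η(0) = 0, η'(0) = 1, and (1/2)η''(x) − q(x)η'(x) = −λη(x) for all x ≥ 0. Assume η is strictly increasing on [0,∞) and that S = ∫₀^∞ e^{Q(y)} (∫_y^∞ e^{−Q(z)} dz) dy = ∞. Then ∫₀^∞ η(z) e^{−Q(z)} dz = 1/(2λ). -/

import Mathlib

open MeasureTheory Set ENNReal
open scoped ENNReal

lemma swap_aux (φ ψ : ℝ → ℝ≥0∞) (hφ : Measurable φ) (hψ : Measurable ψ)
    (hφt : ∀ y, φ y ≠ ⊤) (hψt : ∀ z, ψ z ≠ ⊤) :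
    ∫⁻ y in Ioi (0:ℝ), φ y * ∫⁻ z in Ioi y, ψ z
      = ∫⁻ z in Ioi (0:ℝ), ψ z * ∫⁻ y in Ioo 0 z, φ y := by
  set s : Set (ℝ × ℝ) := {p : ℝ × ℝ | 0 < p.1 ∧ p.1 < p.2} with hs
  have hsm : MeasurableSet s :=
    (measurableSet_lt measurable_const measurable_fst).inter
      (measurableSet_lt measurable_fst measurable_snd)
  set K : ℝ × ℝ → ℝ≥0∞ := s.indicator (fun p => φ p.1 * ψ p.2) with hK
  have hKm : Measurable K :=
    ((hφ.comp measurable_fst).mul (hψ.comp measurable_snd)).indicator hsm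
  have h1 : ∫⁻ y in Ioi (0:ℝ), φ y * ∫⁻ z in Ioi y, ψ z
      = ∫⁻ y, ∫⁻ z, K (y, z) := by
    rw [← lintegral_indicator measurableSet_Ioi]
    congr 1
    ext y
    by_cases hy : y ∈ Ioi (0:ℝ)
    · rw [indicator_of_mem hy, ← lintegral_const_mul' _ _ (hφt y),
        ← lintegral_indicator measurableSet_Ioi]
      congr 1; ext z
      by_cases hz : z ∈ Ioi y
      · rw [indicator_of_mem hz, hK, indicator_of_mem]
        exact ⟨hy, hz⟩
      · rw [indicator_of_notMem hz, hK, indicator_of_notMem]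
        intro h; exact hz h.2
    · rw [indicator_of_notMem hy]
      symm
      simp only [hK]
      rw [← lintegral_zero]
      congr 1; ext z
      rw [indicator_of_notMem]
      intro h; exact hy h.1
  have h2 : ∫⁻ z in Ioi (0:ℝ), ψ z * ∫⁻ y in Ioo 0 z, φ y
      = ∫⁻ z, ∫⁻ y, K (y, z) := by
    rw [← lintegral_indicator measurableSet_Ioi]
    congr 1
    ext z
    by_cases hz : z ∈ Ioi (0:ℝ)
    · rw [indicator_of_mem hz, ← lintegral_const_mul' _ _ (hψt z),
        ← lintegral_indicator measurableSet_Ioo]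
      congr 1; ext y
      by_cases hy : y ∈ Ioo (0:ℝ) z
      · rw [indicator_of_mem hy, hK, indicator_of_mem, mul_comm]
        exact ⟨hy.1, hy.2⟩
      · rw [indicator_of_notMem hy, hK, indicator_of_notMem]
        intro h; exact hy ⟨h.1, h.2⟩
    · rw [indicator_of_notMem hz]
      symm
      simp only [hK]
      rw [← lintegral_zero]
      congr 1; ext y
      rw [indicator_of_notMem]
      intro h; exact hz (lt_trans h.1 h.2)
  rw [h1, h2]
  exact lintegral_lintegral_swap hKm.aemeasurable

theorem stmt_5 (q Q : ℝ → ℝ) (hq : ContDiffOn ℝ 1 q (Ici 0))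
    (hQ : ∀ y, Q y = ∫ t in (0:ℝ)..y, 2 * q t)
    (lam : ℝ) (hlam : 0 < lam) (η η' η'' : ℝ → ℝ)
    (hη' : ∀ x ∈ Ici (0:ℝ), HasDerivWithinAt η (η' x) (Ici 0) x)
    (hη'' : ∀ x ∈ Ici (0:ℝ), HasDerivWithinAt η' (η'' x) (Ici 0) x)
    (hη''c : ContinuousOn η'' (Ici 0))
    (hη0 : η 0 = 0) (hη'0 : η' 0 = 1)
    (hode : ∀ x ≥ (0:ℝ), (1/2) * η'' x - q x * η' x = -lam * η x)
    (hmono : StrictMonoOn η (Ici 0))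
    (hS : ∫⁻ y in Ioi (0:ℝ), ENNReal.ofReal (Real.exp (Q y)) *
        ∫⁻ z in Ioi y, ENNReal.ofReal (Real.exp (-(Q z))) = ⊤) :
    ∫ z in Ioi (0:ℝ), η z * Real.exp (-(Q z)) = 1 / (2 * lam) := by
  have hqc : ContinuousOn (fun t => 2 * q t) (Ici (0:ℝ)) :=
    continuousOn_const.mul (hq.continuousOn)
  -- derivative of Q within Ici 0
  have hQd : ∀ y ∈ Ici (0:ℝ), HasDerivWithinAt Q (2 * q y) (Ici 0) y := by
    intro y hy
    have hy0 : (0:ℝ) ≤ y := hy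
    have hInt : IntervalIntegrable (fun t => 2 * q t) volume 0 y :=
      (hqc.mono (by rw [uIcc_of_le hy0]; exact Icc_subset_Ici_self)).intervalIntegrable
    have hQfun : Q = fun u => ∫ t in (0:ℝ)..u, 2 * q t := funext hQ
    rw [hQfun]
    rcases eq_or_lt_of_le hy0 with h0 | h0
    · subst h0
      exact intervalIntegral.integral_hasDerivWithinAt_right hInt
        ⟨Ioi 0, self_mem_nhdsWithin,
          (hqc.mono Ioi_subset_Ici_self).aestronglyMeasurable measurableSet_Ioi⟩
        ((hqc 0 self_mem_Ici).mono Ioi_subset_Ici_self)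
    · exact (intervalIntegral.integral_hasDerivAt_right hInt
        ⟨Ioi 0, Ioi_mem_nhds h0,
          (hqc.mono Ioi_subset_Ici_self).aestronglyMeasurable measurableSet_Ioi⟩
        (hqc.continuousAt (Ici_mem_nhds h0))).hasDerivWithinAt
  have hQc : ContinuousOn Q (Ici 0) :=
    fun y hy => ((hQd y hy).differentiableWithinAt).continuousWithinAt
  have hηc : ContinuousOn η (Ici 0) :=
    fun y hy => ((hη' y hy).differentiableWithinAt).continuousWithinAt
  have hη'c : ContinuousOn η' (Ici 0) :=
    fun y hy => ((hη'' y hy).differentiableWithinAt).continuousWithinAt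
  -- nonnegativity
  have hηnn : ∀ x ∈ Ici (0:ℝ), 0 ≤ η x := by
    intro x hx
    rcases eq_or_lt_of_le (mem_Ici.1 hx) with h | h
    · rw [← h, hη0]
    · rw [← hη0]; exact le_of_lt (hmono (mem_Ici.2 le_rfl) hx h)
  have hη'nn : ∀ x ∈ Ici (0:ℝ), 0 ≤ η' x := by
    intro x hx
    have ht := hasDerivWithinAt_iff_tendsto_slope.1 (hη' x hx)
    have hsub : Ioi x ⊆ Ici (0:ℝ) \ {x} := by
      intro z hz
      exact ⟨mem_Ici.2 (le_trans (mem_Ici.1 hx) (le_of_lt hz)), ne_of_gt hz⟩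
    have ht' : Filter.Tendsto (slope η x) (nhdsWithin x (Ioi x)) (nhds (η' x)) :=
      ht.mono_left (nhdsWithin_mono x hsub)
    refine ge_of_tendsto ht' ?_
    filter_upwards [self_mem_nhdsWithin] with z hz
    rw [slope_def_field]
    apply div_nonneg _ (le_of_lt (sub_pos.2 hz))
    rw [sub_nonneg]
    exact le_of_lt (hmono hx (mem_Ici.2 (le_trans (mem_Ici.1 hx) (le_of_lt hz))) hz)
  -- g and its derivative
  set g : ℝ → ℝ := fun x => η' x * Real.exp (-(Q x)) with hgdef
  have hgd : ∀ x ∈ Ici (0:ℝ),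
      HasDerivWithinAt g (-(2 * lam) * (η x * Real.exp (-(Q x)))) (Ici 0) x := by
    intro x hx
    have hE : HasDerivWithinAt (fun y => Real.exp (-(Q y)))
        (Real.exp (-(Q x)) * (-(2 * q x))) (Ici 0) x := ((hQd x hx).neg).exp
    have := (hη'' x hx).mul hE
    refine this.congr_deriv ?_
    have h := hode x hx
    linear_combination h * (2 * Real.exp (-(Q x)))
  have hg0 : g 0 = 1 := by
    have : Q 0 = 0 := by rw [hQ 0, intervalIntegral.integral_same]
    simp [hgdef, this, hη'0]
  have hgnn : ∀ x ∈ Ici (0:ℝ), 0 ≤ g x :=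
    fun x hx => mul_nonneg (hη'nn x hx) (le_of_lt (Real.exp_pos _))
  have hgc : ContinuousOn g (Ici 0) :=
    fun x hx => ((hgd x hx).differentiableWithinAt).continuousWithinAt
  -- FTC
  have hfc : ContinuousOn (fun z => η z * Real.exp (-(Q z))) (Ici 0) :=
    hηc.mul (hQc.neg.rexp)
  have hint : ∀ b : ℝ, 0 ≤ b →
      (∫ x in (0:ℝ)..b, η x * Real.exp (-(Q x))) = (1 - g b) / (2 * lam) := by
    intro b hb
    have hIcc : Icc (0:ℝ) b ⊆ Ici 0 := Icc_subset_Ici_self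
    have hFTC : ∫ x in (0:ℝ)..b, -(2 * lam) * (η x * Real.exp (-(Q x))) = g b - g 0 := by
      apply intervalIntegral.integral_eq_sub_of_hasDeriv_right_of_le hb
        (hgc.mono hIcc)
        (fun x hx => (hgd x (le_of_lt hx.1)).mono
          (fun z hz => le_trans (le_of_lt hx.1) (le_of_lt hz)))
      exact ((hfc.mono (by rw [uIcc_of_le hb]; exact hIcc)).intervalIntegrable).const_mul _
    rw [intervalIntegral.integral_const_mul, hg0] at hFTC
    have h2l : (2:ℝ) * lam ≠ 0 := by positivity
    field_simp
    linarith [hFTC]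
  -- integrability
  have hbound : ∀ b : ℝ, 0 ≤ b →
      (∫ x in (0:ℝ)..b, η x * Real.exp (-(Q x))) ≤ 1 / (2 * lam) := by
    intro b hb
    rw [hint b hb]
    have := hgnn b hb
    have h2l : (0:ℝ) < 2 * lam := by positivity
    exact (div_le_div_iff_of_pos_right h2l).2 (by linarith)
  have hfi : ∀ i : ℝ, IntegrableOn (fun z => η z * Real.exp (-(Q z))) (Ioc 0 i) := by
    intro i
    rcases le_or_gt i 0 with h | h
    · rw [Ioc_eq_empty (by exact not_lt.2 h)]
      exact integrableOn_empty
    · exact (hfc.mono (Icc_subset_Ici_self)).integrableOn_Icc.mono_set Ioc_subset_Icc_self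
  have hfint : IntegrableOn (fun z => η z * Real.exp (-(Q z))) (Ioi 0) := by
    apply MeasureTheory.integrableOn_Ioi_of_intervalIntegral_norm_bounded (1/(2*lam)) 0 hfi
      (Filter.tendsto_id (α := ℝ))
    filter_upwards [Filter.eventually_ge_atTop (0:ℝ)] with i hi
    have : ∀ x ∈ uIcc (0:ℝ) i, ‖η x * Real.exp (-(Q x))‖ = η x * Real.exp (-(Q x)) := by
      intro x hx
      rw [uIcc_of_le hi] at hx
      exact Real.norm_of_nonneg (mul_nonneg (hηnn x hx.1) (le_of_lt (Real.exp_pos _)))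
    rw [intervalIntegral.integral_congr this]
    exact hbound i hi
  set I : ℝ := ∫ z in Ioi (0:ℝ), η z * Real.exp (-(Q z)) with hI
  set L : ℝ := 1 - 2 * lam * I with hL
  have htend_int : Filter.Tendsto (fun b => ∫ x in (0:ℝ)..b, η x * Real.exp (-(Q x)))
      Filter.atTop (nhds I) :=
    intervalIntegral_tendsto_integral_Ioi 0 hfint Filter.tendsto_id
  have hgt : Filter.Tendsto g Filter.atTop (nhds L) := by
    have h1 : Filter.Tendsto (fun b => 1 - 2 * lam * ∫ x in (0:ℝ)..b, η x * Real.exp (-(Q x)))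
        Filter.atTop (nhds L) := by
      rw [hL]
      exact Filter.Tendsto.const_sub _ (htend_int.const_mul _)
    apply h1.congr'
    filter_upwards [Filter.eventually_ge_atTop (0:ℝ)] with b hb
    have := hint b hb
    have h2l : (2:ℝ) * lam ≠ 0 := by positivity
    field_simp at this
    linarith
  have hL0 : 0 ≤ L := by
    apply ge_of_tendsto hgt
    filter_upwards [Filter.eventually_ge_atTop (0:ℝ)] with b hb
    exact hgnn b hb
  have hganti : AntitoneOn g (Ici 0) := by
    apply antitoneOn_of_deriv_nonpos (convex_Ici 0) hgc
    · intro x hx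
      rw [interior_Ici] at hx
      exact ((hgd x (mem_Ici.2 (le_of_lt hx))).hasDerivAt (Ici_mem_nhds hx)).differentiableAt.differentiableWithinAt
    · intro x hx
      rw [interior_Ici] at hx
      rw [((hgd x (mem_Ici.2 (le_of_lt hx))).hasDerivAt (Ici_mem_nhds hx)).deriv]
      have h1 := hηnn x (mem_Ici.2 (le_of_lt hx))
      have h2 := mul_nonneg h1 (le_of_lt (Real.exp_pos (-(Q x))))
      nlinarith
  have hgeL : ∀ b ∈ Ici (0:ℝ), L ≤ g b := by
    intro b hb
    apply le_of_tendsto hgt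
    filter_upwards [Filter.eventually_ge_atTop (max b 0)] with y hy
    exact hganti hb (le_trans (le_max_right b 0) hy) (le_trans (le_max_left b 0) hy)
  -- conclude if L = 0
  rcases eq_or_lt_of_le hL0 with hLz | hLpos
  · rw [hL] at hLz
    have h2l : (2:ℝ) * lam ≠ 0 := by positivity
    field_simp
    linarith
  · exfalso
    have hη'ge : ∀ t ∈ Ici (0:ℝ), L * Real.exp (Q t) ≤ η' t := by
      intro t ht
      have h0 := hgeL t ht
      simp only [hgdef] at h0
      have he : Real.exp (-(Q t)) * Real.exp (Q t) = 1 := by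
        rw [← Real.exp_add]; simp
      have hp := Real.exp_pos (Q t)
      have key := mul_le_mul_of_nonneg_right h0 hp.le
      rw [mul_assoc, he, mul_one] at key
      exact key
    have hExpQc : ContinuousOn (fun t => Real.exp (Q t)) (Ici 0) := hQc.rexp
    have hηge : ∀ z ∈ Ici (0:ℝ), L * ∫ t in (0:ℝ)..z, Real.exp (Q t) ≤ η z := by
      intro z hz
      have hIcc : Icc (0:ℝ) z ⊆ Ici 0 := Icc_subset_Ici_self
      have hFTC : ∫ t in (0:ℝ)..z, η' t = η z - η 0 :=
        intervalIntegral.integral_eq_sub_of_hasDeriv_right_of_le hz (hηc.mono hIcc)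
          (fun x hx => (hη' x (le_of_lt hx.1)).mono
            (fun w hw => le_trans (le_of_lt hx.1) (le_of_lt hw)))
          ((hη'c.mono (by rw [uIcc_of_le hz]; exact hIcc)).intervalIntegrable)
      have hmonoInt : (∫ t in (0:ℝ)..z, L * Real.exp (Q t)) ≤ ∫ t in (0:ℝ)..z, η' t := by
        apply intervalIntegral.integral_mono_on hz
          (((hExpQc.mono (by rw [uIcc_of_le hz]; exact hIcc)).intervalIntegrable).const_mul L)
          ((hη'c.mono (by rw [uIcc_of_le hz]; exact hIcc)).intervalIntegrable)
          (fun x hx => hη'ge x (le_trans hx.1 le_rfl))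
      rw [intervalIntegral.integral_const_mul] at hmonoInt
      rw [hη0] at hFTC
      linarith
    set QM : ℝ → ℝ := fun x => Q (max x 0) with hQM
    have hQMc : Continuous QM :=
      hQc.comp_continuous (continuous_id.max continuous_const) (fun x => le_max_right x 0)
    have hQMeq : ∀ x : ℝ, 0 ≤ x → QM x = Q x := by
      intro x hx; rw [hQM]; simp [max_eq_left hx]
    set φ : ℝ → ℝ≥0∞ := fun y => ENNReal.ofReal (Real.exp (QM y)) with hφ
    set ψ : ℝ → ℝ≥0∞ := fun z => ENNReal.ofReal (Real.exp (-(QM z))) with hψ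
    have hφm : Measurable φ :=
      ENNReal.measurable_ofReal.comp (Real.continuous_exp.comp hQMc).measurable
    have hψm : Measurable ψ :=
      ENNReal.measurable_ofReal.comp (Real.continuous_exp.comp hQMc.neg).measurable
    have hS' : ∫⁻ y in Ioi (0:ℝ), φ y * ∫⁻ z in Ioi y, ψ z = ⊤ := by
      rw [← hS]
      apply setLIntegral_congr_fun measurableSet_Ioi
      intro y hy
      have h1 : ∫⁻ z in Ioi y, ψ z = ∫⁻ z in Ioi y, ENNReal.ofReal (Real.exp (-(Q z))) := by
        apply setLIntegral_congr_fun measurableSet_Ioi ?_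
        intro z hz
        rw [hψ]; simp only []
        rw [hQMeq z (le_of_lt (lt_trans hy hz))]
      beta_reduce; rw [h1, hφ]; simp only []
      rw [hQMeq y (le_of_lt hy)]
    have hswap := swap_aux φ ψ hφm hψm (fun _ => ENNReal.ofReal_ne_top)
      (fun _ => ENNReal.ofReal_ne_top)
    rw [hS'] at hswap
    have hinner : ∀ z : ℝ, 0 < z → (∫⁻ y in Ioo (0:ℝ) z, φ y)
        = ENNReal.ofReal (∫ t in (0:ℝ)..z, Real.exp (Q t)) := by
      intro z hz
      have hint1 : IntegrableOn (fun y => Real.exp (QM y)) (Ioo 0 z) :=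
        ((Real.continuous_exp.comp hQMc).integrableOn_Icc).mono_set Ioo_subset_Icc_self
      rw [← MeasureTheory.ofReal_integral_eq_lintegral_ofReal hint1
        (ae_of_all _ fun y => (Real.exp_pos _).le)]
      congr 1
      rw [intervalIntegral.integral_of_le (le_of_lt hz), integral_Ioc_eq_integral_Ioo]
      apply setIntegral_congr_fun measurableSet_Ioo
      intro y hy
      simp only []
      rw [hQMeq y (le_of_lt hy.1)]
    have hfin : (∫⁻ z in Ioi (0:ℝ), ENNReal.ofReal (η z * Real.exp (-(Q z)))) < ⊤ := by
      rw [← MeasureTheory.hasFiniteIntegral_iff_ofReal]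
      · exact hfint.2
      · apply (ae_restrict_iff' measurableSet_Ioi).2 (ae_of_all _ ?_)
        intro z hz
        exact mul_nonneg (hηnn z (mem_Ici.2 (le_of_lt hz))) (Real.exp_pos _).le
    have hge : (∫⁻ z in Ioi (0:ℝ), ENNReal.ofReal L * (ψ z * ∫⁻ y in Ioo 0 z, φ y))
        ≤ ∫⁻ z in Ioi (0:ℝ), ENNReal.ofReal (η z * Real.exp (-(Q z))) := by
      apply lintegral_mono_ae
      apply (ae_restrict_iff' measurableSet_Ioi).2 (ae_of_all _ ?_)
      intro z hz
      rw [hinner z hz, hψ]; simp only []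
      rw [hQMeq z (le_of_lt hz)]
      rw [← ENNReal.ofReal_mul (Real.exp_pos _).le, ← ENNReal.ofReal_mul hL0]
      apply ENNReal.ofReal_le_ofReal
      have hA : 0 ≤ ∫ t in (0:ℝ)..z, Real.exp (Q t) :=
        intervalIntegral.integral_nonneg (le_of_lt hz) (fun t _ => (Real.exp_pos _).le)
      have h1 := hηge z (mem_Ici.2 (le_of_lt hz))
      have h2 := Real.exp_pos (-(Q z))
      nlinarith [mul_le_mul_of_nonneg_right h1 h2.le]
    rw [lintegral_const_mul' _ _ ENNReal.ofReal_ne_top, ← hswap,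
      ENNReal.mul_top (by simp [ENNReal.ofReal_eq_zero, not_le, hLpos])] at hge
    exact absurd hfin (not_lt.2 hge)
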